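/- On a probability space, let ((B_m, B'_m))_{m∈ℤ} be a family of pairs of random variables with values in {0,1}×{0,1} such that the pairs (B_m, B'_m) are mutually independent across m ∈ ℤ, and suppose there is a constant θ ∈ [0,1) with E|B'_m − B_m| ≤ θ for every m. For integers m ≤ n set I(n,m) := (∏_{j=m+1}^{n} (B'_j − B_j)) · B_m. Then for every n ∈ ℤ the series Σ_{m ≤ n} I(n,m) converges absolutely almost surely, its partial sums K(n,i) = Σ_{m=i}^{n} I(n,m) converge in L^k for every k ≥ 1 as i → −∞, and the almost sure limit K_n := Σ_{m ≤ n} I(n,m) takes values in {0,1} almost surely. -/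

import Mathlib

open MeasureTheory ProbabilityTheory Filter
open scoped ENNReal NNReal

lemma kpz_det_aux (b b' : ℤ → ℝ) (hb : ∀ j, b j = 0 ∨ b j = 1)
    (hb' : ∀ j, b' j = 0 ∨ b' j = 1) (J : ℤ) :
    ∀ n, J ≤ n →
      (∑ m ∈ Finset.Icc J n, (∏ j ∈ Finset.Icc (m + 1) n, (b' j - b j)) * b m) = 0 ∨
      (∑ m ∈ Finset.Icc J n, (∏ j ∈ Finset.Icc (m + 1) n, (b' j - b j)) * b m) = 1 := by
  intro n
  refine Int.le_induction
    (motive := fun n _ => (∑ m ∈ Finset.Icc J n, (∏ j ∈ Finset.Icc (m + 1) n, (b' j - b j)) * b m) = 0 ∨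
      (∑ m ∈ Finset.Icc J n, (∏ j ∈ Finset.Icc (m + 1) n, (b' j - b j)) * b m) = 1) ?_ ?_ n
  · show _ ∨ _
    rw [Finset.Icc_self, Finset.sum_singleton,
      Finset.Icc_eq_empty (by omega : ¬ J + 1 ≤ J), Finset.prod_empty, one_mul]
    exact hb J
  · intro n hn IH
    show _ ∨ _
    have h1 : Finset.Icc J (n + 1) = insert (n + 1) (Finset.Icc J n) := by
      ext x; simp only [Finset.mem_Icc, Finset.mem_insert]; omega
    rw [h1, Finset.sum_insert (by simp only [Finset.mem_Icc]; omega)]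
    rw [Finset.Icc_eq_empty (by omega : ¬ (n + 1) + 1 ≤ n + 1), Finset.prod_empty, one_mul]
    have h2 : ∀ m ∈ Finset.Icc J n,
        (∏ j ∈ Finset.Icc (m + 1) (n + 1), (b' j - b j)) * b m
          = (b' (n + 1) - b (n + 1)) * ((∏ j ∈ Finset.Icc (m + 1) n, (b' j - b j)) * b m) := by
      intro m hm
      rw [Finset.mem_Icc] at hm
      have : Finset.Icc (m + 1) (n + 1) = insert (n + 1) (Finset.Icc (m + 1) n) := by
        ext x; simp only [Finset.mem_Icc, Finset.mem_insert]; omega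
      rw [this, Finset.prod_insert (by simp only [Finset.mem_Icc]; omega), mul_assoc]
    rw [Finset.sum_congr rfl h2, ← Finset.mul_sum]
    rcases IH with h | h
    · rw [h, mul_zero, add_zero]; exact hb (n + 1)
    · rw [h, mul_one]
      rcases hb' (n + 1) with h' | h' <;> rcases hb (n + 1) with h'' | h'' <;>
        rw [h', h''] <;> norm_num

theorem kpz_K_series_convergence
    {Ω : Type*} [MeasurableSpace Ω] (μ : Measure Ω) [IsProbabilityMeasure μ]
    (B B' : ℤ → Ω → ℝ)
    (hBmeas : ∀ m, Measurable (B m)) (hB'meas : ∀ m, Measurable (B' m))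
    (hB01 : ∀ m ω, B m ω = 0 ∨ B m ω = 1)
    (hB'01 : ∀ m ω, B' m ω = 0 ∨ B' m ω = 1)
    (hindep : iIndepFun
      (fun m ω => (B m ω, B' m ω)) μ)
    (θ : ℝ) (hθ0 : 0 ≤ θ) (hθ1 : θ < 1)
    (hmom : ∀ m, ∫ ω, |B' m ω - B m ω| ∂μ ≤ θ)
    (n : ℤ) :
    (∀ᵐ ω ∂μ, Summable (fun m : {m : ℤ // m ≤ n} =>
        |(∏ j ∈ Finset.Icc ((m : ℤ) + 1) n, (B' j ω - B j ω)) * B (m : ℤ) ω|)) ∧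
    (∀ k : ℝ, 1 ≤ k →
      Tendsto (fun i : ℤ => eLpNorm (fun ω =>
          (∑ m ∈ Finset.Icc i n, (∏ j ∈ Finset.Icc (m + 1) n, (B' j ω - B j ω)) * B m ω)
          - ∑' m : {m : ℤ // m ≤ n},
              (∏ j ∈ Finset.Icc ((m : ℤ) + 1) n, (B' j ω - B j ω)) * B (m : ℤ) ω)
        (ENNReal.ofReal k) μ) atBot (nhds 0)) ∧
    (∀ᵐ ω ∂μ,
      (∑' m : {m : ℤ // m ≤ n},
          (∏ j ∈ Finset.Icc ((m : ℤ) + 1) n, (B' j ω - B j ω)) * B (m : ℤ) ω) = 0 ∨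
      (∑' m : {m : ℤ // m ≤ n},
          (∏ j ∈ Finset.Icc ((m : ℤ) + 1) n, (B' j ω - B j ω)) * B (m : ℤ) ω) = 1) := by
  classical
  -- notation
  -- the "disagreement" events
  set E : ℤ → Set Ω := fun j => (fun ω => (B j ω, B' j ω)) ⁻¹' {p : ℝ × ℝ | p.1 ≠ p.2} with hEdef
  have hmemE : ∀ j ω, ω ∈ E j ↔ B j ω ≠ B' j ω := fun j ω => Iff.rfl
  have hEmeas : ∀ j, MeasurableSet (E j) := by
    intro j
    exact ((hBmeas j).prodMk (hB'meas j))
      (measurableSet_eq_fun measurable_fst measurable_snd).compl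
  have hEcomap : ∀ j, MeasurableSet[MeasurableSpace.comap
      (fun ω => (B j ω, B' j ω)) inferInstance] (E j) := by
    intro j
    exact ⟨{p : ℝ × ℝ | p.1 ≠ p.2},
      (measurableSet_eq_fun measurable_fst measurable_snd).compl, rfl⟩
  set ρ : ℝ≥0∞ := ENNReal.ofReal θ with hρdef
  have hρ1 : ρ < 1 := by
    rw [hρdef]
    exact ENNReal.ofReal_lt_one.2 hθ1
  -- |B' - B| is the indicator of E j
  have hind : ∀ j ω, |B' j ω - B j ω| = (E j).indicator (fun _ => (1:ℝ)) ω := by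
    intro j ω
    by_cases h : B j ω = B' j ω
    · rw [Set.indicator_of_notMem (by simp [hmemE, h])]
      rw [sub_eq_zero.2 h.symm, abs_zero]
    · rw [Set.indicator_of_mem (by simp [hmemE, h])]
      rcases hB01 j ω with h1 | h1 <;> rcases hB'01 j ω with h2 | h2 <;>
        rw [h1, h2] at h ⊢ <;> norm_num at h <;> norm_num
  have hEμ : ∀ j, μ (E j) ≤ ρ := by
    intro j
    have h1 : ∫ ω, |B' j ω - B j ω| ∂μ = (μ (E j)).toReal := by
      rw [show (fun ω => |B' j ω - B j ω|) = (E j).indicator (fun _ => (1:ℝ)) from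
        funext fun ω => hind j ω]
      exact integral_indicator_one (hEmeas j)
    have h2 : (μ (E j)).toReal ≤ θ := h1 ▸ hmom j
    rw [hρdef]
    exact (ENNReal.le_ofReal_iff_toReal_le (measure_ne_top μ _) hθ0).2 h2
  -- the events where all of (m, n] disagree
  set A : ℤ → Set Ω := fun m => ⋂ j ∈ Finset.Icc (m + 1) n, E j with hAdef
  have hAmeas : ∀ m, MeasurableSet (A m) :=
    fun m => Finset.measurableSet_biInter _ (fun j _ => hEmeas j)
  have hAμ : ∀ m, μ (A m) ≤ ρ ^ (n - m).toNat := by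
    intro m
    have h1 : μ (A m) = ∏ j ∈ Finset.Icc (m + 1) n, μ (E j) :=
      hindep.meas_biInter (fun j _ => hEcomap j)
    have h2 : (Finset.Icc (m + 1) n).card = (n - m).toNat := by
      rw [Int.card_Icc]; congr 1; omega
    calc μ (A m) = ∏ j ∈ Finset.Icc (m + 1) n, μ (E j) := h1
      _ ≤ ρ ^ (Finset.Icc (m + 1) n).card :=
          Finset.prod_le_pow_card _ _ _ (fun j _ => hEμ j)
      _ = ρ ^ (n - m).toNat := by rw [h2]
  -- almost surely, some index J ≤ n has B' J = B J
  have hae : ∀ᵐ ω ∂μ, ∃ J, J ≤ n ∧ B' J ω = B J ω := by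
    have hbad : μ (⋂ (m : ℤ) (_ : m ≤ n), E m) = 0 := by
      have hle : ∀ t : ℕ, μ (⋂ (m : ℤ) (_ : m ≤ n), E m) ≤ ρ ^ t := by
        intro t
        refine le_trans (measure_mono ?_) (le_trans (hAμ (n - t)) ?_)
        · rw [hAdef]
          intro ω hω
          simp only [Set.mem_iInter, Finset.mem_Icc] at *
          intro j hj
          exact hω j (by omega)
        · rw [show (n - (n - t)).toNat = t by omega]
      have h0 : Tendsto (fun t : ℕ => ρ ^ t) atTop (nhds 0) :=
        ENNReal.tendsto_pow_atTop_nhds_zero_of_lt_one hρ1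
      exact le_antisymm (ge_of_tendsto' h0 hle) zero_le
    rw [ae_iff]
    refine measure_mono_null ?_ hbad
    intro ω hω
    simp only [Set.mem_setOf_eq, not_exists, not_and] at hω
    simp only [Set.mem_iInter]
    intro m hm
    exact fun h => hω m hm h.symm
  -- terms vanish below a matching index
  have hIzero : ∀ (ω : Ω) (J m : ℤ), J ≤ n → B' J ω = B J ω → m < J →
      (∏ j ∈ Finset.Icc (m + 1) n, (B' j ω - B j ω)) * B m ω = 0 := by
    intro ω J m hJn hJ hm
    rw [Finset.prod_eq_zero (Finset.mem_Icc.2 ⟨by omega, hJn⟩ : J ∈ Finset.Icc (m + 1) n)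
      (by rw [hJ, sub_self]), zero_mul]
  -- the tsum equals a finite sum
  have htsum : ∀ (ω : Ω) (J : ℤ), J ≤ n → B' J ω = B J ω → ∀ c, c ≤ J →
      (∑' m : {m : ℤ // m ≤ n},
          (∏ j ∈ Finset.Icc ((m : ℤ) + 1) n, (B' j ω - B j ω)) * B (m : ℤ) ω)
        = ∑ m ∈ Finset.Icc c n, (∏ j ∈ Finset.Icc (m + 1) n, (B' j ω - B j ω)) * B m ω := by
    intro ω J hJn hJ c hc
    have h1 : ∀ b : {m : ℤ // m ≤ n}, b ∉ (Finset.Icc c n).subtype (· ≤ n) →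
        (∏ j ∈ Finset.Icc ((b : ℤ) + 1) n, (B' j ω - B j ω)) * B (b : ℤ) ω = 0 := by
      intro b hb
      rw [Finset.mem_subtype, Finset.mem_Icc] at hb
      have hlt : (b : ℤ) < c := by
        by_contra h
        exact hb ⟨not_lt.1 h, b.2⟩
      exact hIzero ω J b hJn hJ (by omega)
    rw [tsum_eq_sum h1,
      Finset.sum_subtype_eq_sum_filter
        (fun m => (∏ j ∈ Finset.Icc (m + 1) n, (B' j ω - B j ω)) * B m ω),
      Finset.filter_true_of_mem (fun x hx => (Finset.mem_Icc.1 hx).2)]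
  refine ⟨?_, ?_, ?_⟩
  · -- Part 1 : a.s. absolute summability
    filter_upwards [hae] with ω hω
    obtain ⟨J, hJn, hJ⟩ := hω
    refine summable_of_ne_finset_zero (s := (Finset.Icc J n).subtype (· ≤ n)) ?_
    intro b hb
    rw [Finset.mem_subtype, Finset.mem_Icc] at hb
    have hlt : (b : ℤ) < J := by
      by_contra h
      exact hb ⟨not_lt.1 h, b.2⟩
    exact abs_eq_zero.2 (hIzero ω J b hJn hJ hlt)
  · -- Part 2 : Lᵏ convergence
    intro k hk
    have hk0 : (0:ℝ) < k := by linarith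
    set p : ℝ≥0∞ := ENNReal.ofReal k with hpdef
    have hp0 : p ≠ 0 := by
      rw [hpdef]
      exact (ENNReal.ofReal_pos.2 hk0).ne'
    have hp1 : (1:ℝ≥0∞) ≤ p := by rw [hpdef]; exact ENNReal.one_le_ofReal.2 hk
    have hptop : p ≠ ∞ := ENNReal.ofReal_ne_top
    have hpt : p.toReal = k := by rw [hpdef, ENNReal.toReal_ofReal hk0.le]
    set σ : ℝ≥0∞ := ρ ^ (1 / k) with hσdef
    have hσ1 : σ < 1 := ENNReal.rpow_lt_one hρ1 (by positivity)
    have hσtop : (1 - σ)⁻¹ ≠ ∞ :=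
      ENNReal.inv_ne_top.2 (fun h => absurd (tsub_eq_zero_iff_le.1 h) (not_le.2 hσ1))
    have hImeas : ∀ m : ℤ, Measurable
        (fun ω => (∏ j ∈ Finset.Icc (m + 1) n, (B' j ω - B j ω)) * B m ω) := by
      intro m
      exact (Finset.measurable_prod _ (fun j _ => (hB'meas j).sub (hBmeas j))).mul (hBmeas m)
    -- norm of a single term
    have hterm : ∀ m : ℤ, m ≤ n →
        eLpNorm (fun ω => (∏ j ∈ Finset.Icc (m + 1) n, (B' j ω - B j ω)) * B m ω) p μ
          ≤ σ ^ (n - m).toNat := by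
      intro m hm
      have hle : ∀ ω, ‖(∏ j ∈ Finset.Icc (m + 1) n, (B' j ω - B j ω)) * B m ω‖
          ≤ ‖(A m).indicator (fun _ => (1:ℝ)) ω‖ := by
        intro ω
        by_cases hω : ω ∈ A m
        · rw [Set.indicator_of_mem hω, Real.norm_eq_abs, Real.norm_eq_abs, abs_one, abs_mul]
          have h1 : |∏ j ∈ Finset.Icc (m + 1) n, (B' j ω - B j ω)| ≤ 1 := by
            rw [Finset.abs_prod]
            refine Finset.prod_le_one (fun j _ => abs_nonneg _) ?_
            intro j hj
            rcases hB01 j ω with h1 | h1 <;> rcases hB'01 j ω with h2 | h2 <;>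
              rw [h1, h2] <;> norm_num
          have h2 : |B m ω| ≤ 1 := by rcases hB01 m ω with h | h <;> rw [h] <;> norm_num
          calc |∏ j ∈ Finset.Icc (m + 1) n, (B' j ω - B j ω)| * |B m ω|
              ≤ 1 * 1 := mul_le_mul h1 h2 (abs_nonneg _) zero_le_one
            _ = 1 := mul_one 1
        · rw [Set.indicator_of_notMem hω]
          have hj : ∃ j ∈ Finset.Icc (m + 1) n, B j ω = B' j ω := by
            by_contra h
            push_neg at h
            refine hω ?_
            rw [hAdef]
            simp only [Set.mem_iInter]
            intro j hjj
            exact h j hjj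
          obtain ⟨j, hj, hjeq⟩ := hj
          rw [Finset.prod_eq_zero (f := fun j => B' j ω - B j ω) hj (sub_eq_zero.2 hjeq.symm), zero_mul]
      calc eLpNorm (fun ω => (∏ j ∈ Finset.Icc (m + 1) n, (B' j ω - B j ω)) * B m ω) p μ
          ≤ eLpNorm ((A m).indicator fun _ => (1:ℝ)) p μ := eLpNorm_mono hle
        _ = ‖(1:ℝ)‖₊ * μ (A m) ^ (1 / p.toReal) := eLpNorm_indicator_const (hAmeas m) hp0 hptop
        _ ≤ σ ^ (n - m).toNat := by
            rw [nnnorm_one, ENNReal.coe_one, one_mul, hpt]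
            calc μ (A m) ^ (1 / k) ≤ (ρ ^ (n - m).toNat) ^ (1 / k) :=
                ENNReal.rpow_le_rpow (hAμ m) (by positivity)
              _ = σ ^ (n - m).toNat := by
                  rw [hσdef, ← ENNReal.rpow_natCast ρ ((n - m).toNat),
                    ← ENNReal.rpow_natCast (ρ ^ (1 / k)) ((n - m).toNat),
                    ← ENNReal.rpow_mul, ← ENNReal.rpow_mul]
                  congr 1
                  ring
    -- geometric bound for a block of terms
    have hblock : ∀ i : ℤ, i ≤ n → ∀ T : ℕ,
        eLpNorm (fun ω => ∑ m ∈ Finset.Icc (i - (T:ℤ)) (i - 1),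
            (∏ j ∈ Finset.Icc (m + 1) n, (B' j ω - B j ω)) * B m ω) p μ
          ≤ σ ^ (n - i + 1).toNat * (1 - σ)⁻¹ := by
      intro i hi T
      have h1 : eLpNorm (fun ω => ∑ m ∈ Finset.Icc (i - (T:ℤ)) (i - 1),
            (∏ j ∈ Finset.Icc (m + 1) n, (B' j ω - B j ω)) * B m ω) p μ
          ≤ ∑ m ∈ Finset.Icc (i - (T:ℤ)) (i - 1),
              eLpNorm (fun ω => (∏ j ∈ Finset.Icc (m + 1) n, (B' j ω - B j ω)) * B m ω) p μ := by
        have h0 := eLpNorm_sum_le (μ := μ) (p := p)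
          (f := fun m ω => (∏ j ∈ Finset.Icc (m + 1) n, (B' j ω - B j ω)) * B m ω)
          (s := Finset.Icc (i - (T:ℤ)) (i - 1))
          (fun m _ => (hImeas m).aestronglyMeasurable) hp1
        have heq : (∑ m ∈ Finset.Icc (i - (T:ℤ)) (i - 1),
            fun ω => (∏ j ∈ Finset.Icc (m + 1) n, (B' j ω - B j ω)) * B m ω)
            = fun ω => ∑ m ∈ Finset.Icc (i - (T:ℤ)) (i - 1),
                (∏ j ∈ Finset.Icc (m + 1) n, (B' j ω - B j ω)) * B m ω := by
          funext ω
          simp [Finset.sum_apply]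
        rwa [heq] at h0
      refine h1.trans ?_
      have h2 : ∀ m ∈ Finset.Icc (i - (T:ℤ)) (i - 1),
          eLpNorm (fun ω => (∏ j ∈ Finset.Icc (m + 1) n, (B' j ω - B j ω)) * B m ω) p μ
            ≤ σ ^ (n - i + 1).toNat * σ ^ (i - 1 - m).toNat := by
        intro m hm
        rw [Finset.mem_Icc] at hm
        refine (hterm m (by omega)).trans (le_of_eq ?_)
        rw [← pow_add]
        congr 1
        omega
      refine (Finset.sum_le_sum h2).trans ?_
      rw [← Finset.mul_sum]
      refine mul_le_mul_right ?_ _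
      have hinj : ∀ a ∈ Finset.Icc (i - (T:ℤ)) (i - 1), ∀ b ∈ Finset.Icc (i - (T:ℤ)) (i - 1),
          (i - 1 - a).toNat = (i - 1 - b).toNat → a = b := by
        intro a ha b hb hab
        rw [Finset.mem_Icc] at ha hb
        omega
      calc ∑ m ∈ Finset.Icc (i - (T:ℤ)) (i - 1), σ ^ (i - 1 - m).toNat
          = ∑ t ∈ (Finset.Icc (i - (T:ℤ)) (i - 1)).image (fun m => (i - 1 - m).toNat), σ ^ t :=
            (Finset.sum_image hinj).symm
        _ ≤ ∑' t : ℕ, σ ^ t := ENNReal.sum_le_tsum _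
        _ = (1 - σ)⁻¹ := ENNReal.tsum_geometric σ
    -- bound the distance to the limit
    have hbound : ∀ i : ℤ, i ≤ n →
        eLpNorm (fun ω =>
          (∑ m ∈ Finset.Icc i n, (∏ j ∈ Finset.Icc (m + 1) n, (B' j ω - B j ω)) * B m ω)
          - ∑' m : {m : ℤ // m ≤ n},
              (∏ j ∈ Finset.Icc ((m : ℤ) + 1) n, (B' j ω - B j ω)) * B (m : ℤ) ω) p μ
          ≤ σ ^ (n - i + 1).toNat * (1 - σ)⁻¹ := by
      intro i hi
      have hlim : ∀ᵐ ω ∂μ, Tendsto (fun T : ℕ =>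
          -(fun ω => ∑ m ∈ Finset.Icc (i - (T:ℤ)) (i - 1),
              (∏ j ∈ Finset.Icc (m + 1) n, (B' j ω - B j ω)) * B m ω) ω) atTop
          (nhds ((∑ m ∈ Finset.Icc i n,
              (∏ j ∈ Finset.Icc (m + 1) n, (B' j ω - B j ω)) * B m ω)
            - ∑' m : {m : ℤ // m ≤ n},
              (∏ j ∈ Finset.Icc ((m : ℤ) + 1) n, (B' j ω - B j ω)) * B (m : ℤ) ω)) := by
        filter_upwards [hae] with ω hω
        obtain ⟨J, hJn, hJ⟩ := hω
        refine tendsto_const_nhds.congr' ?_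
        rw [EventuallyEq, eventually_atTop]
        refine ⟨(i - J).toNat, fun T hT => ?_⟩
        have hcT : i - (T:ℤ) ≤ J := by omega
        rw [htsum ω J hJn hJ (i - (T:ℤ)) hcT]
        have e1 : Finset.Icc (i - (T:ℤ)) (i - 1) = Finset.Ioc (i - (T:ℤ) - 1) (i - 1) := by
          ext x; simp only [Finset.mem_Icc, Finset.mem_Ioc]; omega
        have e2 : Finset.Icc i n = Finset.Ioc (i - 1) n := by
          ext x; simp only [Finset.mem_Icc, Finset.mem_Ioc]; omega
        have e3 : Finset.Icc (i - (T:ℤ)) n = Finset.Ioc (i - (T:ℤ) - 1) n := by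
          ext x; simp only [Finset.mem_Icc, Finset.mem_Ioc]; omega
        have hsplit : (∑ m ∈ Finset.Ioc (i - (T:ℤ) - 1) (i - 1),
              (∏ j ∈ Finset.Icc (m + 1) n, (B' j ω - B j ω)) * B m ω)
            + ∑ m ∈ Finset.Ioc (i - 1) n,
              (∏ j ∈ Finset.Icc (m + 1) n, (B' j ω - B j ω)) * B m ω
            = ∑ m ∈ Finset.Ioc (i - (T:ℤ) - 1) n,
              (∏ j ∈ Finset.Icc (m + 1) n, (B' j ω - B j ω)) * B m ω := by
          rw [← Finset.sum_union (by
            rw [Finset.disjoint_left]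
            intro a ha hb
            rw [Finset.mem_Ioc] at ha hb
            omega), Finset.Ioc_union_Ioc_eq_Ioc (by omega) (by omega)]
        rw [e1, e2, e3]
        linarith [hsplit]
      have hF : ∀ T : ℕ, AEStronglyMeasurable
          (-(fun ω => ∑ m ∈ Finset.Icc (i - (T:ℤ)) (i - 1),
              (∏ j ∈ Finset.Icc (m + 1) n, (B' j ω - B j ω)) * B m ω)) μ := by
        intro T
        exact ((Finset.measurable_sum _ (fun m _ => hImeas m)).neg).aestronglyMeasurable
      refine (Lp.eLpNorm_lim_le_liminf_eLpNorm hF _ hlim).trans ?_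
      refine liminf_le_of_frequently_le' (Frequently.of_forall fun T => ?_)
      rw [eLpNorm_neg]
      exact hblock i hi T
    -- conclude via squeeze
    have htoNat : Tendsto (fun i : ℤ => (n - i + 1).toNat) atBot atTop := by
      rw [tendsto_atTop]
      intro b
      rw [eventually_atBot]
      exact ⟨n + 1 - b, fun i hi => by omega⟩
    have h1 : Tendsto (fun i : ℤ => σ ^ (n - i + 1).toNat * (1 - σ)⁻¹) atBot (nhds 0) := by
      have h2 := (ENNReal.tendsto_pow_atTop_nhds_zero_of_lt_one hσ1).comp htoNat
      have h3 := ENNReal.Tendsto.mul_const (b := (1 - σ)⁻¹) h2 (Or.inr hσtop)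
      simpa using h3
    refine tendsto_of_tendsto_of_tendsto_of_le_of_le' tendsto_const_nhds h1
      (Eventually.of_forall fun i => zero_le) ?_
    rw [eventually_atBot]
    exact ⟨n, fun i hi => hbound i hi⟩
  · -- Part 3 : the limit is 0 or 1 a.s.
    filter_upwards [hae] with ω hω
    obtain ⟨J, hJn, hJ⟩ := hω
    rw [htsum ω J hJn hJ J le_rfl]
    exact kpz_det_aux (fun j => B j ω) (fun j => B' j ω) (fun j => hB01 j ω)
      (fun j => hB'01 j ω) J n hJn
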